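/- In the minority game with 2k+1 players, let ℓ, r ∈ {0,...,2k+1} with ℓ + r ≤ 2k - 1 (so there are at least 2 mixers). There exists λ ∈ (0,1) such that the profile of type (ℓ, r, λ) is a Nash equilibrium if and only if max{ℓ, r} < k; moreover, when it exists, this λ is unique. -/

import Mathlib

open Finset

private lemma nat_choose_succ_mul (n t : ℕ) (hn : 1 ≤ n) :
    n.choose (t + 1) * (t + 1) = n * (n - 1).choose t := by
  obtain ⟨m, rfl⟩ : ∃ m, n = m + 1 := ⟨n - 1, by omega⟩
  simpa [Nat.add_sub_cancel] using (Nat.add_one_mul_choose_eq m t).symm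

private lemma nat_choose_mul_sub (n s : ℕ) (hs : s < n) :
    n.choose s * (n - s) = n * (n - 1).choose s := by
  obtain ⟨m, rfl⟩ : ∃ m, n = m + 1 := ⟨n - 1, by omega⟩
  have hsm : s ≤ m := by omega
  have h1 : (m + 1) * m.choose (m - s) = (m + 1).choose (m - s + 1) * (m - s + 1) :=
    Nat.add_one_mul_choose_eq m (m - s)
  rw [Nat.choose_symm hsm] at h1
  have h2 : m - s + 1 = m + 1 - s := by omega
  rw [h2] at h1
  have h3 : (m + 1).choose (m + 1 - s) = (m + 1).choose s := Nat.choose_symm (by omega)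
  rw [h3] at h1
  simpa [Nat.add_sub_cancel] using h1.symm

private lemma bern_deriv (n : ℕ) (g : ℕ → ℝ) (x : ℝ) :
    HasDerivAt (fun y : ℝ => ∑ s ∈ range (n + 1),
        (n.choose s : ℝ) * y ^ s * (1 - y) ^ (n - s) * g s)
      (∑ s ∈ range (n + 1), (n.choose s : ℝ) *
        ((s : ℝ) * x ^ (s - 1) * (1 - x) ^ (n - s)
          - x ^ s * ((n - s : ℕ) : ℝ) * (1 - x) ^ (n - s - 1)) * g s) x := by
  apply HasDerivAt.fun_sum
  intro s _
  have h1 : HasDerivAt (fun y : ℝ => y ^ s) ((s : ℝ) * x ^ (s - 1)) x := hasDerivAt_pow s x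
  have h2 : HasDerivAt (fun y : ℝ => (1 - y) ^ (n - s))
      (-(((n - s : ℕ) : ℝ) * (1 - x) ^ (n - s - 1))) x := by
    have := (hasDerivAt_pow (n - s) (1 - x)).comp x
      ((hasDerivAt_const x (1 : ℝ)).sub (hasDerivAt_id x))
    simpa [Function.comp_def] using this
  have H := ((h1.fun_mul h2).const_mul ((n.choose s : ℝ))).mul_const (g s)
  have hfun : (fun y : ℝ => (n.choose s : ℝ) * y ^ s * (1 - y) ^ (n - s) * g s)
      = fun y : ℝ => (n.choose s : ℝ) * (y ^ s * (1 - y) ^ (n - s)) * g s := by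
    funext y; ring
  rw [hfun]
  convert H using 1
  · rfl
  ring

private lemma bern_deriv_eq (n : ℕ) (hn : 1 ≤ n) (g : ℕ → ℝ) (x : ℝ) :
    (∑ s ∈ range (n + 1), (n.choose s : ℝ) *
        ((s : ℝ) * x ^ (s - 1) * (1 - x) ^ (n - s)
          - x ^ s * ((n - s : ℕ) : ℝ) * (1 - x) ^ (n - s - 1)) * g s)
    = ∑ t ∈ range n, (n : ℝ) * ((n - 1).choose t : ℝ) * x ^ t * (1 - x) ^ (n - 1 - t)
        * (g (t + 1) - g t) := by
  have hA : (∑ s ∈ range (n + 1),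
        (n.choose s : ℝ) * ((s : ℝ) * x ^ (s - 1) * (1 - x) ^ (n - s)) * g s)
      = ∑ t ∈ range n, (n : ℝ) * ((n - 1).choose t : ℝ) * x ^ t * (1 - x) ^ (n - 1 - t)
          * g (t + 1) := by
    rw [Finset.sum_range_succ']
    simp only [Nat.cast_zero, zero_mul, mul_zero, zero_add, add_zero]
    refine Finset.sum_congr rfl fun t ht => ?_
    have hc : ((n.choose (t + 1) : ℕ) : ℝ) * (((t + 1 : ℕ)) : ℝ)
        = (n : ℝ) * ((n - 1).choose t : ℝ) := by
      rw [← Nat.cast_mul, ← Nat.cast_mul, nat_choose_succ_mul n t hn]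
    have he : n - (t + 1) = n - 1 - t := by omega
    have he2 : t + 1 - 1 = t := by omega
    rw [he, he2]
    linear_combination (x ^ t * (1 - x) ^ (n - 1 - t) * g (t + 1)) * hc
  have hB : (∑ s ∈ range (n + 1),
        (n.choose s : ℝ) * (x ^ s * ((n - s : ℕ) : ℝ) * (1 - x) ^ (n - s - 1)) * g s)
      = ∑ t ∈ range n, (n : ℝ) * ((n - 1).choose t : ℝ) * x ^ t * (1 - x) ^ (n - 1 - t)
          * g t := by
    rw [Finset.sum_range_succ]
    simp only [Nat.sub_self, Nat.cast_zero, mul_zero, zero_mul, add_zero]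
    refine Finset.sum_congr rfl fun t ht => ?_
    simp only [mem_range] at ht
    have hc : ((n - t : ℕ) : ℝ) * ((n.choose t : ℕ) : ℝ)
        = (n : ℝ) * ((n - 1).choose t : ℝ) := by
      rw [← Nat.cast_mul, ← Nat.cast_mul, mul_comm (n - t), nat_choose_mul_sub n t ht]
    have he : n - t - 1 = n - 1 - t := by omega
    rw [he]
    linear_combination (x ^ t * (1 - x) ^ (n - 1 - t) * g t) * hc
  calc (∑ s ∈ range (n + 1), (n.choose s : ℝ) *
        ((s : ℝ) * x ^ (s - 1) * (1 - x) ^ (n - s)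
          - x ^ s * ((n - s : ℕ) : ℝ) * (1 - x) ^ (n - s - 1)) * g s)
      = (∑ s ∈ range (n + 1),
          (n.choose s : ℝ) * ((s : ℝ) * x ^ (s - 1) * (1 - x) ^ (n - s)) * g s)
        - ∑ s ∈ range (n + 1),
          (n.choose s : ℝ) * (x ^ s * ((n - s : ℕ) : ℝ) * (1 - x) ^ (n - s - 1)) * g s := by
        rw [← Finset.sum_sub_distrib]
        exact Finset.sum_congr rfl fun s _ => by ring
    _ = (∑ t ∈ range n, (n : ℝ) * ((n - 1).choose t : ℝ) * x ^ t * (1 - x) ^ (n - 1 - t)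
          * g (t + 1))
        - ∑ t ∈ range n, (n : ℝ) * ((n - 1).choose t : ℝ) * x ^ t * (1 - x) ^ (n - 1 - t)
          * g t := by rw [hA, hB]
    _ = _ := by
        rw [← Finset.sum_sub_distrib]
        exact Finset.sum_congr rfl fun t _ => by ring

/-- Existence and uniqueness of equilibria of type (ℓ,r,λ) with at least two
mixers: a λ ∈ (0,1) solving the mixers' indifference equation exists iff
max{ℓ,r} < k, and it is unique when it exists.  Here m = 2k+1-ℓ-r ≥ 2. -/
theorem stmt_9 (k : ℕ) (hk : 1 ≤ k) (f : ℕ → ℝ)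
    (hf : StrictAntiOn f (Set.Icc 1 (2 * k + 1)))
    (l r : ℕ) (hlr : l + r ≤ 2 * k - 1)
    (indiff : ℝ → Prop)
    (hindiff : ∀ lam : ℝ, indiff lam ↔
      (∑ s ∈ Finset.range (2 * k + 1 - l - r),
        ((2 * k - l - r).choose s : ℝ) * lam ^ s * (1 - lam) ^ (2 * k - l - r - s)
          * f (l + 1 + s)) =
      ∑ s ∈ Finset.range (2 * k + 1 - l - r),
        ((2 * k - l - r).choose s : ℝ) * lam ^ s * (1 - lam) ^ (2 * k - l - r - s)
          * f (r + (2 * k + 1 - l - r) - s)) :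
    ((∃ lam ∈ Set.Ioo (0:ℝ) 1, indiff lam) ↔ max l r < k) ∧
      (∀ lam₁ ∈ Set.Ioo (0:ℝ) 1, ∀ lam₂ ∈ Set.Ioo (0:ℝ) 1,
        indiff lam₁ → indiff lam₂ → lam₁ = lam₂) := by
  set n := 2 * k - l - r with hn_def
  have hn1 : 1 ≤ n := by omega
  have hm : 2 * k + 1 - l - r = n + 1 := by omega
  set g : ℕ → ℝ := fun s => f (l + 1 + s) - f (2 * k + 1 - l - s) with hg
  set G : ℝ → ℝ := fun x => ∑ s ∈ range (n + 1),
      (n.choose s : ℝ) * x ^ s * (1 - x) ^ (n - s) * g s with hGdef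
  -- indiff ↔ G = 0
  have hiff : ∀ x : ℝ, indiff x ↔ G x = 0 := by
    intro x
    have hsplit : G x = (∑ s ∈ range (n + 1),
          (n.choose s : ℝ) * x ^ s * (1 - x) ^ (n - s) * f (l + 1 + s))
        - ∑ s ∈ range (n + 1),
          (n.choose s : ℝ) * x ^ s * (1 - x) ^ (n - s) * f (r + (n + 1) - s) := by
      rw [hGdef, ← Finset.sum_sub_distrib]
      refine Finset.sum_congr rfl fun s hs => ?_
      simp only [mem_range] at hs
      have : r + (n + 1) - s = 2 * k + 1 - l - s := by omega
      rw [this, hg]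
      ring
    rw [hindiff x, hm, hsplit, sub_eq_zero]
  -- g is strictly decreasing on 0..n
  have hgdec : ∀ t, t < n → g (t + 1) < g t := by
    intro t ht
    have h1 : f (l + 1 + (t + 1)) < f (l + 1 + t) := by
      apply hf (by simp [Set.mem_Icc]; omega) (by simp [Set.mem_Icc]; omega) (by omega)
    have h2 : f (2 * k + 1 - l - t) < f (2 * k + 1 - l - (t + 1)) := by
      apply hf (by simp [Set.mem_Icc]; omega) (by simp [Set.mem_Icc]; omega) (by omega)
    simp only [hg]
    linarith
  -- endpoint values
  have hG0 : G 0 = g 0 := by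
    simp only [hGdef]
    rw [Finset.sum_eq_single 0]
    · norm_num
    · intro s hs hs0
      simp [zero_pow hs0]
    · intro h; simp at h
  have hG1 : G 1 = g n := by
    simp only [hGdef]
    rw [Finset.sum_eq_single n]
    · norm_num
    · intro s hs hsn
      simp only [mem_range] at hs
      have : n - s ≠ 0 := by omega
      simp [zero_pow this]
    · intro h; simp at h
  -- continuity
  have hcont : Continuous G := by
    rw [hGdef]
    exact continuous_finset_sum _ fun s _ => by fun_prop
  -- strict antitonicity
  have hanti : StrictAntiOn G (Set.Icc 0 1) := by
    apply strictAntiOn_of_deriv_neg (convex_Icc 0 1) hcont.continuousOn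
    intro x hx
    rw [interior_Icc] at hx
    have hd := (bern_deriv n g x).deriv
    rw [hGdef, hd, bern_deriv_eq n hn1 g x]
    apply Finset.sum_neg
    · intro t ht
      simp only [mem_range] at ht
      have hpos : (0 : ℝ) < (n : ℝ) * ((n - 1).choose t : ℝ) * x ^ t * (1 - x) ^ (n - 1 - t) := by
        have hc : 0 < ((n - 1).choose t : ℝ) := by
          exact_mod_cast Nat.choose_pos (by omega)
        have hx1 : (0 : ℝ) < 1 - x := by linarith [hx.2]
        have hn0 : (0 : ℝ) < (n : ℝ) := by exact_mod_cast hn1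
        exact mul_pos (mul_pos (mul_pos hn0 hc) (pow_pos hx.1 t)) (pow_pos hx1 _)
      have := hgdec t ht
      exact mul_neg_of_pos_of_neg hpos (by linarith)
    · exact Finset.nonempty_range_iff.mpr (by omega)
  constructor
  · constructor
    · rintro ⟨lam, hlam, hind⟩
      have hGlam : G lam = 0 := (hiff lam).1 hind
      by_contra hmax
      have : l ≥ k ∨ r ≥ k := by
        rcases max_lt_iff.not.1 hmax with h
        omega
      rcases this with hl | hr
      · have hg0 : g 0 ≤ 0 := by
          simp only [hg]
          have := hf.antitoneOn (a := 2 * k + 1 - l - 0) (b := l + 1 + 0)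
            (by simp [Set.mem_Icc]; omega) (by simp [Set.mem_Icc]; omega) (by omega)
          linarith
        have : G lam < G 0 := hanti (Set.mem_Icc.2 ⟨le_refl 0, zero_le_one⟩)
          (Set.mem_Icc.2 ⟨hlam.1.le, hlam.2.le⟩) hlam.1
        rw [hG0, hGlam] at this
        linarith
      · have hgn : 0 ≤ g n := by
          simp only [hg]
          have := hf.antitoneOn (a := l + 1 + n) (b := 2 * k + 1 - l - n)
            (by simp [Set.mem_Icc]; omega) (by simp [Set.mem_Icc]; omega) (by omega)
          linarith
        have : G 1 < G lam := hanti (Set.mem_Icc.2 ⟨hlam.1.le, hlam.2.le⟩)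
          (Set.mem_Icc.2 ⟨zero_le_one, le_refl 1⟩) hlam.2
        rw [hG1, hGlam] at this
        linarith
    · intro hmax
      have hl : l < k := lt_of_le_of_lt (le_max_left l r) hmax
      have hr : r < k := lt_of_le_of_lt (le_max_right l r) hmax
      have hg0 : 0 < g 0 := by
        simp only [hg]
        have := hf (a := l + 1 + 0) (b := 2 * k + 1 - l - 0)
          (by simp [Set.mem_Icc]; omega) (by simp [Set.mem_Icc]; omega) (by omega)
        linarith
      have hgn : g n < 0 := by
        simp only [hg]
        have := hf (a := 2 * k + 1 - l - n) (b := l + 1 + n)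
          (by simp [Set.mem_Icc]; omega) (by simp [Set.mem_Icc]; omega) (by omega)
        linarith
      have h0mem : (0 : ℝ) ∈ Set.Ioo (G 1) (G 0) := by
        rw [hG0, hG1]; exact ⟨hgn, hg0⟩
      obtain ⟨lam, hlam, hGlam⟩ := intermediate_value_Ioo' (zero_le_one) hcont.continuousOn h0mem
      exact ⟨lam, hlam, (hiff lam).2 hGlam⟩
  · intro lam₁ h1 lam₂ h2 hi1 hi2
    apply hanti.injOn (Set.mem_Icc.2 ⟨h1.1.le, h1.2.le⟩) (Set.mem_Icc.2 ⟨h2.1.le, h2.2.le⟩)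
    rw [(hiff lam₁).1 hi1, (hiff lam₂).1 hi2]
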